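/- The rational function F(w¹,w²,w³,w⁴) = w¹(w¹w²/8 + w³w⁴/4) + (w²)⁵/3840 + (w²)²w³w⁴/32 + w²(w⁴)⁴/768 + (w³)³/(6w⁴) satisfies the WDVV associativity equations on the domain {w⁴ ≠ 0} ⊂ ℝ⁴ with constant metric η given by η₁₂ = η₂₁ = 1/4, η₃₄ = η₄₃ = 1/4 and all other entries zero: for all α,β one has ∂₁∂_α∂_β F = η_{αβ}, the matrix η is invertible, and the structure constants c^γ_{αβ} = Σ_ε (η⁻¹)^{γε} ∂_ε∂_α∂_β F satisfy Σ_ε c^ε_{αβ} c^σ_{εγ} = Σ_ε c^ε_{αγ} c^σ_{εβ} for all α,β,γ,σ at every point with w⁴ ≠ 0. -/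

import Mathlib

/-- Partial derivative of `f : (Fin N → ℝ) → ℝ` in the `i`-th coordinate direction. -/
noncomputable def pd {N : ℕ} (i : Fin N) (f : (Fin N → ℝ) → ℝ) : (Fin N → ℝ) → ℝ :=
  fun x => fderiv ℝ f x (Pi.single i 1)

/-- The potential. -/
noncomputable def FF : (Fin 4 → ℝ) → ℝ :=
  fun w => w 0 * (w 0 * w 1 / 8 + w 2 * w 3 / 4) + (w 1) ^ 5 / 3840 + (w 1) ^ 2 * w 2 * w 3 / 32 + w 1 * (w 3) ^ 4 / 768 + (w 2) ^ 3 / (6 * w 3)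

/-- The constant metric. -/
noncomputable def eta : Matrix (Fin 4) (Fin 4) ℝ :=
  !![0, 1/4, 0, 0; 1/4, 0, 0, 0; 0, 0, 0, 1/4; 0, 0, 1/4, 0]

/-- Third partial derivatives `c_(αβγ) = ∂_α ∂_β ∂_γ F`. -/
noncomputable def c3 (α β γ : Fin 4) (x : Fin 4 → ℝ) : ℝ :=
  pd α (pd β (pd γ FF)) x

/-- Structure constants `c^γ_(αβ) = Σ_ε (η⁻¹)^(γε) c_(εαβ)`. -/
noncomputable def cUp (γ α β : Fin 4) (x : Fin 4 → ℝ) : ℝ :=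
  ∑ ε, eta⁻¹ γ ε * c3 ε α β x

/-! ### Auxiliary machinery -/

noncomputable def pr (i : Fin 4) : (Fin 4 → ℝ) →L[ℝ] ℝ := ContinuousLinearMap.proj i

theorem pr_apply (j : Fin 4) (v : Fin 4 → ℝ) : pr j v = v j := rfl

theorem hasF_coord (i : Fin 4) (x : Fin 4 → ℝ) :
    HasFDerivAt (fun w : Fin 4 → ℝ => w i) (pr i) x := (pr i).hasFDerivAt

theorem hasF_pow {f : (Fin 4 → ℝ) → ℝ} {f' : (Fin 4 → ℝ) →L[ℝ] ℝ} {x : Fin 4 → ℝ}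
    (h : HasFDerivAt f f' x) (n : ℕ) :
    HasFDerivAt (fun w => f w ^ n) (((n : ℝ) * f x ^ (n - 1)) • f') x :=
  (hasDerivAt_pow n (f x)).comp_hasFDerivAt x h

theorem hasF_inv {f : (Fin 4 → ℝ) → ℝ} {f' : (Fin 4 → ℝ) →L[ℝ] ℝ} {x : Fin 4 → ℝ}
    (h : HasFDerivAt f f' x) (hx : f x ≠ 0) :
    HasFDerivAt (fun w => (f w)⁻¹) ((-(f x ^ 2)⁻¹) • f') x :=
  (hasDerivAt_inv hx).comp_hasFDerivAt x h

theorem HasFDerivAt.divc {f : (Fin 4 → ℝ) → ℝ} {f' : (Fin 4 → ℝ) →L[ℝ] ℝ} {x : Fin 4 → ℝ}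
    (h : HasFDerivAt f f' x) (c : ℝ) :
    HasFDerivAt (fun w => f w / c) (c⁻¹ • f') x := by
  simpa [div_eq_mul_inv, mul_comm] using h.const_mul c⁻¹

theorem pd_val {f : (Fin 4 → ℝ) → ℝ} {D : (Fin 4 → ℝ) →L[ℝ] ℝ} {x : Fin 4 → ℝ}
    (h : HasFDerivAt f D x) (i : Fin 4) : pd i f x = D (Pi.single i 1) := by
  simp [pd, h.fderiv]

theorem h4 : ∀ j : Fin 4, j = 0 ∨ j = 1 ∨ j = 2 ∨ j = 3 := by decide

theorem sv0 : (Pi.single (0:Fin 4) 1 : Fin 4 → ℝ) = ![1,0,0,0] := by funext j; fin_cases j <;> simp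
theorem sv1 : (Pi.single (1:Fin 4) 1 : Fin 4 → ℝ) = ![0,1,0,0] := by funext j; fin_cases j <;> simp
theorem sv2 : (Pi.single (2:Fin 4) 1 : Fin 4 → ℝ) = ![0,0,1,0] := by funext j; fin_cases j <;> simp
theorem sv3 : (Pi.single (3:Fin 4) 1 : Fin 4 → ℝ) = ![0,0,0,1] := by funext j; fin_cases j <;> simp

theorem pd_congr (i : Fin 4) {f g : (Fin 4 → ℝ) → ℝ}
    (h : ∀ y : Fin 4 → ℝ, y 3 ≠ 0 → f y = g y) {x : Fin 4 → ℝ} (hx : x 3 ≠ 0) :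
    pd i f x = pd i g x := by
  have ho : {y : Fin 4 → ℝ | y 3 ≠ 0} ∈ nhds x :=
    (isOpen_ne.preimage (continuous_apply 3)).mem_nhds hx
  unfold pd
  congr 1
  exact Filter.EventuallyEq.fderiv_eq (Filter.eventuallyEq_of_mem ho h)

noncomputable def gE : Fin 4 → (Fin 4 → ℝ) → ℝ :=
  ![fun w => (((w 0 * w 1) / 4) + ((w 2 * w 3) / 4)),
    fun w => ((((w 0 ^ 2 / 8) + (w 1 ^ 4 / 768)) + (((w 1 * w 2) * w 3) / 16)) + (w 3 ^ 4 / 768)),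
    fun w => ((((w 0 * w 3) / 4) + ((w 1 ^ 2 * w 3) / 32)) + ((w 2 ^ 2 * (w 3 ^ 1)⁻¹) / 2)),
    fun w => (((((w 0 * w 2) / 4) + ((w 1 ^ 2 * w 2) / 32)) + ((w 1 * w 3 ^ 3) / 192)) - ((w 2 ^ 3 * (w 3 ^ 2)⁻¹) / 6))]

noncomputable def hE : Fin 4 → Fin 4 → (Fin 4 → ℝ) → ℝ :=
  ![![fun w => (w 1 / 4),
      fun w => (w 0 / 4),
      fun w => (w 3 / 4),
      fun w => (w 2 / 4)],
    ![fun w => (w 0 / 4),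
      fun w => ((w 1 ^ 3 / 192) + ((w 2 * w 3) / 16)),
      fun w => ((w 1 * w 3) / 16),
      fun w => (((w 1 * w 2) / 16) + (w 3 ^ 3 / 192))],
    ![fun w => (w 3 / 4),
      fun w => ((w 1 * w 3) / 16),
      fun w => (w 2 * (w 3 ^ 1)⁻¹),
      fun w => (((w 0 / 4) + (w 1 ^ 2 / 32)) - ((w 2 ^ 2 * (w 3 ^ 2)⁻¹) / 2))],
    ![fun w => (w 2 / 4),
      fun w => (((w 1 * w 2) / 16) + (w 3 ^ 3 / 192)),
      fun w => (((w 0 / 4) + (w 1 ^ 2 / 32)) - ((w 2 ^ 2 * (w 3 ^ 2)⁻¹) / 2)),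
      fun w => (((w 1 * w 3 ^ 2) / 64) + ((w 2 ^ 3 * (w 3 ^ 3)⁻¹) / 3))]]

noncomputable def cE : Fin 4 → Fin 4 → Fin 4 → (Fin 4 → ℝ) → ℝ :=
  ![![![fun _ => (0:ℝ), fun _ => (1:ℝ)/4, fun _ => (0:ℝ), fun _ => (0:ℝ)],
      ![fun _ => (1:ℝ)/4, fun _ => (0:ℝ), fun _ => (0:ℝ), fun _ => (0:ℝ)],
      ![fun _ => (0:ℝ), fun _ => (0:ℝ), fun _ => (0:ℝ), fun _ => (1:ℝ)/4],
      ![fun _ => (0:ℝ), fun _ => (0:ℝ), fun _ => (1:ℝ)/4, fun _ => (0:ℝ)]],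
    ![![fun _ => (1:ℝ)/4, fun _ => (0:ℝ), fun _ => (0:ℝ), fun _ => (0:ℝ)],
      ![fun _ => (0:ℝ), fun w => w 1 ^ 2 / 64, fun w => w 3 / 16, fun w => w 2 / 16],
      ![fun _ => (0:ℝ), fun w => w 3 / 16, fun _ => (0:ℝ), fun w => w 1 / 16],
      ![fun _ => (0:ℝ), fun w => w 2 / 16, fun w => w 1 / 16, fun w => w 3 ^ 2 / 64]],
    ![![fun _ => (0:ℝ), fun _ => (0:ℝ), fun _ => (0:ℝ), fun _ => (1:ℝ)/4],
      ![fun _ => (0:ℝ), fun w => w 3 / 16, fun _ => (0:ℝ), fun w => w 1 / 16],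
      ![fun _ => (0:ℝ), fun _ => (0:ℝ), fun w => (w 3 ^ 1)⁻¹, fun w => -(w 2 * (w 3 ^ 2)⁻¹)],
      ![fun _ => (1:ℝ)/4, fun w => w 1 / 16, fun w => -(w 2 * (w 3 ^ 2)⁻¹), fun w => w 2 ^ 2 * (w 3 ^ 3)⁻¹]],
    ![![fun _ => (0:ℝ), fun _ => (0:ℝ), fun _ => (1:ℝ)/4, fun _ => (0:ℝ)],
      ![fun _ => (0:ℝ), fun w => w 2 / 16, fun w => w 1 / 16, fun w => w 3 ^ 2 / 64],
      ![fun _ => (1:ℝ)/4, fun w => w 1 / 16, fun w => -(w 2 * (w 3 ^ 2)⁻¹), fun w => w 2 ^ 2 * (w 3 ^ 3)⁻¹],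
      ![fun _ => (0:ℝ), fun w => w 3 ^ 2 / 64, fun w => w 2 ^ 2 * (w 3 ^ 3)⁻¹, fun w => w 1 * w 3 / 32 - w 2 ^ 3 * (w 3 ^ 4)⁻¹]]]

set_option maxHeartbeats 2000000 in
theorem pd_FF (i : Fin 4) (x : Fin 4 → ℝ) (hx : x 3 ≠ 0) : pd i FF x = gE i x := by
  have h6 : (fun w : Fin 4 → ℝ => 6 * w 3) x ≠ 0 := mul_ne_zero (by norm_num) hx
  have H : HasFDerivAt FF _ x :=
    ((((((hasF_coord 0 x).mul ((((hasF_coord 0 x).mul (hasF_coord 1 x)).divc 8).add (((hasF_coord 2 x).mul (hasF_coord 3 x)).divc 4))).add ((hasF_pow (hasF_coord 1 x) 5).divc 3840)).add ((((hasF_pow (hasF_coord 1 x) 2).mul (hasF_coord 2 x)).mul (hasF_coord 3 x)).divc 32)).add (((hasF_coord 1 x).mul (hasF_pow (hasF_coord 3 x) 4)).divc 768)).add ((hasF_pow (hasF_coord 2 x) 3).mul (hasF_inv ((hasF_coord 3 x).const_mul 6) h6)))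
  rw [pd_val H]
  rcases h4 i with rfl|rfl|rfl|rfl <;>
      simp only [ContinuousLinearMap.add_apply, ContinuousLinearMap.coe_smul', Pi.smul_apply,
        ContinuousLinearMap.sub_apply, ContinuousLinearMap.neg_apply, sv0, sv1, sv2, sv3,
        pr_apply, smul_eq_mul, gE, Matrix.cons_val] <;>
      norm_num [gE, Pi.single_eq_same, Matrix.vecHead, Matrix.vecTail] <;> (try field_simp) <;> (try ring)

set_option maxHeartbeats 2000000 in
theorem pd_gE (γ i : Fin 4) (x : Fin 4 → ℝ) (hx : x 3 ≠ 0) :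
    pd i (gE γ) x = hE γ i x := by
  rcases h4 γ with rfl|rfl|rfl|rfl
  · have H : HasFDerivAt (gE 0) _ x :=
      ((((hasF_coord 0 x).mul (hasF_coord 1 x)).divc 4).add (((hasF_coord 2 x).mul (hasF_coord 3 x)).divc 4))
    rw [pd_val H]
    rcases h4 i with rfl|rfl|rfl|rfl <;>
      simp only [ContinuousLinearMap.add_apply, ContinuousLinearMap.coe_smul', Pi.smul_apply,
        ContinuousLinearMap.sub_apply, ContinuousLinearMap.neg_apply, sv0, sv1, sv2, sv3,
        pr_apply, smul_eq_mul, hE, Matrix.cons_val] <;>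
      norm_num [hE, Pi.single_eq_same, Matrix.vecHead, Matrix.vecTail] <;> (try field_simp) <;> (try ring)
  · have H : HasFDerivAt (gE 1) _ x :=
      (((((hasF_pow (hasF_coord 0 x) 2).divc 8).add ((hasF_pow (hasF_coord 1 x) 4).divc 768)).add ((((hasF_coord 1 x).mul (hasF_coord 2 x)).mul (hasF_coord 3 x)).divc 16)).add ((hasF_pow (hasF_coord 3 x) 4).divc 768))
    rw [pd_val H]
    rcases h4 i with rfl|rfl|rfl|rfl <;>
      simp only [ContinuousLinearMap.add_apply, ContinuousLinearMap.coe_smul', Pi.smul_apply,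
        ContinuousLinearMap.sub_apply, ContinuousLinearMap.neg_apply, sv0, sv1, sv2, sv3,
        pr_apply, smul_eq_mul, hE, Matrix.cons_val] <;>
      norm_num [hE, Pi.single_eq_same, Matrix.vecHead, Matrix.vecTail] <;> (try field_simp) <;> (try ring)
  · have H : HasFDerivAt (gE 2) _ x :=
      (((((hasF_coord 0 x).mul (hasF_coord 3 x)).divc 4).add (((hasF_pow (hasF_coord 1 x) 2).mul (hasF_coord 3 x)).divc 32)).add (((hasF_pow (hasF_coord 2 x) 2).mul (hasF_inv (hasF_pow (hasF_coord 3 x) 1) (pow_ne_zero 1 hx))).divc 2))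
    rw [pd_val H]
    rcases h4 i with rfl|rfl|rfl|rfl <;>
      simp only [ContinuousLinearMap.add_apply, ContinuousLinearMap.coe_smul', Pi.smul_apply,
        ContinuousLinearMap.sub_apply, ContinuousLinearMap.neg_apply, sv0, sv1, sv2, sv3,
        pr_apply, smul_eq_mul, hE, Matrix.cons_val] <;>
      norm_num [hE, Pi.single_eq_same, Matrix.vecHead, Matrix.vecTail] <;> (try field_simp) <;> (try ring)
  · have H : HasFDerivAt (gE 3) _ x :=
      ((((((hasF_coord 0 x).mul (hasF_coord 2 x)).divc 4).add (((hasF_pow (hasF_coord 1 x) 2).mul (hasF_coord 2 x)).divc 32)).add (((hasF_coord 1 x).mul (hasF_pow (hasF_coord 3 x) 3)).divc 192)).sub (((hasF_pow (hasF_coord 2 x) 3).mul (hasF_inv (hasF_pow (hasF_coord 3 x) 2) (pow_ne_zero 2 hx))).divc 6))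
    rw [pd_val H]
    rcases h4 i with rfl|rfl|rfl|rfl <;>
      simp only [ContinuousLinearMap.add_apply, ContinuousLinearMap.coe_smul', Pi.smul_apply,
        ContinuousLinearMap.sub_apply, ContinuousLinearMap.neg_apply, sv0, sv1, sv2, sv3,
        pr_apply, smul_eq_mul, hE, Matrix.cons_val] <;>
      norm_num [hE, Pi.single_eq_same, Matrix.vecHead, Matrix.vecTail] <;> (try field_simp) <;> (try ring)

set_option maxHeartbeats 4000000 in
theorem pd_hE (γ β i : Fin 4) (x : Fin 4 → ℝ) (hx : x 3 ≠ 0) :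
    pd i (hE γ β) x = cE γ β i x := by
  rcases h4 γ with rfl|rfl|rfl|rfl <;> rcases h4 β with rfl|rfl|rfl|rfl
  · have H : HasFDerivAt (hE 0 0) _ x :=
      ((hasF_coord 1 x).divc 4)
    rw [pd_val H]
    rcases h4 i with rfl|rfl|rfl|rfl <;>
      simp only [ContinuousLinearMap.add_apply, ContinuousLinearMap.coe_smul', Pi.smul_apply,
        ContinuousLinearMap.sub_apply, ContinuousLinearMap.neg_apply, sv0, sv1, sv2, sv3,
        pr_apply, smul_eq_mul, cE, Matrix.cons_val] <;>
      norm_num [cE, Pi.single_eq_same, Matrix.vecHead, Matrix.vecTail] <;> (try field_simp) <;> (try ring)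
  · have H : HasFDerivAt (hE 0 1) _ x :=
      ((hasF_coord 0 x).divc 4)
    rw [pd_val H]
    rcases h4 i with rfl|rfl|rfl|rfl <;>
      simp only [ContinuousLinearMap.add_apply, ContinuousLinearMap.coe_smul', Pi.smul_apply,
        ContinuousLinearMap.sub_apply, ContinuousLinearMap.neg_apply, sv0, sv1, sv2, sv3,
        pr_apply, smul_eq_mul, cE, Matrix.cons_val] <;>
      norm_num [cE, Pi.single_eq_same, Matrix.vecHead, Matrix.vecTail] <;> (try field_simp) <;> (try ring)
  · have H : HasFDerivAt (hE 0 2) _ x :=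
      ((hasF_coord 3 x).divc 4)
    rw [pd_val H]
    rcases h4 i with rfl|rfl|rfl|rfl <;>
      simp only [ContinuousLinearMap.add_apply, ContinuousLinearMap.coe_smul', Pi.smul_apply,
        ContinuousLinearMap.sub_apply, ContinuousLinearMap.neg_apply, sv0, sv1, sv2, sv3,
        pr_apply, smul_eq_mul, cE, Matrix.cons_val] <;>
      norm_num [cE, Pi.single_eq_same, Matrix.vecHead, Matrix.vecTail] <;> (try field_simp) <;> (try ring)
  · have H : HasFDerivAt (hE 0 3) _ x :=
      ((hasF_coord 2 x).divc 4)
    rw [pd_val H]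
    rcases h4 i with rfl|rfl|rfl|rfl <;>
      simp only [ContinuousLinearMap.add_apply, ContinuousLinearMap.coe_smul', Pi.smul_apply,
        ContinuousLinearMap.sub_apply, ContinuousLinearMap.neg_apply, sv0, sv1, sv2, sv3,
        pr_apply, smul_eq_mul, cE, Matrix.cons_val] <;>
      norm_num [cE, Pi.single_eq_same, Matrix.vecHead, Matrix.vecTail] <;> (try field_simp) <;> (try ring)
  · have H : HasFDerivAt (hE 1 0) _ x :=
      ((hasF_coord 0 x).divc 4)
    rw [pd_val H]
    rcases h4 i with rfl|rfl|rfl|rfl <;>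
      simp only [ContinuousLinearMap.add_apply, ContinuousLinearMap.coe_smul', Pi.smul_apply,
        ContinuousLinearMap.sub_apply, ContinuousLinearMap.neg_apply, sv0, sv1, sv2, sv3,
        pr_apply, smul_eq_mul, cE, Matrix.cons_val] <;>
      norm_num [cE, Pi.single_eq_same, Matrix.vecHead, Matrix.vecTail] <;> (try field_simp) <;> (try ring)
  · have H : HasFDerivAt (hE 1 1) _ x :=
      (((hasF_pow (hasF_coord 1 x) 3).divc 192).add (((hasF_coord 2 x).mul (hasF_coord 3 x)).divc 16))
    rw [pd_val H]
    rcases h4 i with rfl|rfl|rfl|rfl <;>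
      simp only [ContinuousLinearMap.add_apply, ContinuousLinearMap.coe_smul', Pi.smul_apply,
        ContinuousLinearMap.sub_apply, ContinuousLinearMap.neg_apply, sv0, sv1, sv2, sv3,
        pr_apply, smul_eq_mul, cE, Matrix.cons_val] <;>
      norm_num [cE, Pi.single_eq_same, Matrix.vecHead, Matrix.vecTail] <;> (try field_simp) <;> (try ring)
  · have H : HasFDerivAt (hE 1 2) _ x :=
      (((hasF_coord 1 x).mul (hasF_coord 3 x)).divc 16)
    rw [pd_val H]
    rcases h4 i with rfl|rfl|rfl|rfl <;>
      simp only [ContinuousLinearMap.add_apply, ContinuousLinearMap.coe_smul', Pi.smul_apply,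
        ContinuousLinearMap.sub_apply, ContinuousLinearMap.neg_apply, sv0, sv1, sv2, sv3,
        pr_apply, smul_eq_mul, cE, Matrix.cons_val] <;>
      norm_num [cE, Pi.single_eq_same, Matrix.vecHead, Matrix.vecTail] <;> (try field_simp) <;> (try ring)
  · have H : HasFDerivAt (hE 1 3) _ x :=
      ((((hasF_coord 1 x).mul (hasF_coord 2 x)).divc 16).add ((hasF_pow (hasF_coord 3 x) 3).divc 192))
    rw [pd_val H]
    rcases h4 i with rfl|rfl|rfl|rfl <;>
      simp only [ContinuousLinearMap.add_apply, ContinuousLinearMap.coe_smul', Pi.smul_apply,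
        ContinuousLinearMap.sub_apply, ContinuousLinearMap.neg_apply, sv0, sv1, sv2, sv3,
        pr_apply, smul_eq_mul, cE, Matrix.cons_val] <;>
      norm_num [cE, Pi.single_eq_same, Matrix.vecHead, Matrix.vecTail] <;> (try field_simp) <;> (try ring)
  · have H : HasFDerivAt (hE 2 0) _ x :=
      ((hasF_coord 3 x).divc 4)
    rw [pd_val H]
    rcases h4 i with rfl|rfl|rfl|rfl <;>
      simp only [ContinuousLinearMap.add_apply, ContinuousLinearMap.coe_smul', Pi.smul_apply,
        ContinuousLinearMap.sub_apply, ContinuousLinearMap.neg_apply, sv0, sv1, sv2, sv3,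
        pr_apply, smul_eq_mul, cE, Matrix.cons_val] <;>
      norm_num [cE, Pi.single_eq_same, Matrix.vecHead, Matrix.vecTail] <;> (try field_simp) <;> (try ring)
  · have H : HasFDerivAt (hE 2 1) _ x :=
      (((hasF_coord 1 x).mul (hasF_coord 3 x)).divc 16)
    rw [pd_val H]
    rcases h4 i with rfl|rfl|rfl|rfl <;>
      simp only [ContinuousLinearMap.add_apply, ContinuousLinearMap.coe_smul', Pi.smul_apply,
        ContinuousLinearMap.sub_apply, ContinuousLinearMap.neg_apply, sv0, sv1, sv2, sv3,
        pr_apply, smul_eq_mul, cE, Matrix.cons_val] <;>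
      norm_num [cE, Pi.single_eq_same, Matrix.vecHead, Matrix.vecTail] <;> (try field_simp) <;> (try ring)
  · have H : HasFDerivAt (hE 2 2) _ x :=
      ((hasF_coord 2 x).mul (hasF_inv (hasF_pow (hasF_coord 3 x) 1) (pow_ne_zero 1 hx)))
    rw [pd_val H]
    rcases h4 i with rfl|rfl|rfl|rfl <;>
      simp only [ContinuousLinearMap.add_apply, ContinuousLinearMap.coe_smul', Pi.smul_apply,
        ContinuousLinearMap.sub_apply, ContinuousLinearMap.neg_apply, sv0, sv1, sv2, sv3,
        pr_apply, smul_eq_mul, cE, Matrix.cons_val] <;>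
      norm_num [cE, Pi.single_eq_same, Matrix.vecHead, Matrix.vecTail] <;> (try field_simp) <;> (try ring)
  · have H : HasFDerivAt (hE 2 3) _ x :=
      ((((hasF_coord 0 x).divc 4).add ((hasF_pow (hasF_coord 1 x) 2).divc 32)).sub (((hasF_pow (hasF_coord 2 x) 2).mul (hasF_inv (hasF_pow (hasF_coord 3 x) 2) (pow_ne_zero 2 hx))).divc 2))
    rw [pd_val H]
    rcases h4 i with rfl|rfl|rfl|rfl <;>
      simp only [ContinuousLinearMap.add_apply, ContinuousLinearMap.coe_smul', Pi.smul_apply,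
        ContinuousLinearMap.sub_apply, ContinuousLinearMap.neg_apply, sv0, sv1, sv2, sv3,
        pr_apply, smul_eq_mul, cE, Matrix.cons_val] <;>
      norm_num [cE, Pi.single_eq_same, Matrix.vecHead, Matrix.vecTail] <;> (try field_simp) <;> (try ring)
  · have H : HasFDerivAt (hE 3 0) _ x :=
      ((hasF_coord 2 x).divc 4)
    rw [pd_val H]
    rcases h4 i with rfl|rfl|rfl|rfl <;>
      simp only [ContinuousLinearMap.add_apply, ContinuousLinearMap.coe_smul', Pi.smul_apply,
        ContinuousLinearMap.sub_apply, ContinuousLinearMap.neg_apply, sv0, sv1, sv2, sv3,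
        pr_apply, smul_eq_mul, cE, Matrix.cons_val] <;>
      norm_num [cE, Pi.single_eq_same, Matrix.vecHead, Matrix.vecTail] <;> (try field_simp) <;> (try ring)
  · have H : HasFDerivAt (hE 3 1) _ x :=
      ((((hasF_coord 1 x).mul (hasF_coord 2 x)).divc 16).add ((hasF_pow (hasF_coord 3 x) 3).divc 192))
    rw [pd_val H]
    rcases h4 i with rfl|rfl|rfl|rfl <;>
      simp only [ContinuousLinearMap.add_apply, ContinuousLinearMap.coe_smul', Pi.smul_apply,
        ContinuousLinearMap.sub_apply, ContinuousLinearMap.neg_apply, sv0, sv1, sv2, sv3,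
        pr_apply, smul_eq_mul, cE, Matrix.cons_val] <;>
      norm_num [cE, Pi.single_eq_same, Matrix.vecHead, Matrix.vecTail] <;> (try field_simp) <;> (try ring)
  · have H : HasFDerivAt (hE 3 2) _ x :=
      ((((hasF_coord 0 x).divc 4).add ((hasF_pow (hasF_coord 1 x) 2).divc 32)).sub (((hasF_pow (hasF_coord 2 x) 2).mul (hasF_inv (hasF_pow (hasF_coord 3 x) 2) (pow_ne_zero 2 hx))).divc 2))
    rw [pd_val H]
    rcases h4 i with rfl|rfl|rfl|rfl <;>
      simp only [ContinuousLinearMap.add_apply, ContinuousLinearMap.coe_smul', Pi.smul_apply,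
        ContinuousLinearMap.sub_apply, ContinuousLinearMap.neg_apply, sv0, sv1, sv2, sv3,
        pr_apply, smul_eq_mul, cE, Matrix.cons_val] <;>
      norm_num [cE, Pi.single_eq_same, Matrix.vecHead, Matrix.vecTail] <;> (try field_simp) <;> (try ring)
  · have H : HasFDerivAt (hE 3 3) _ x :=
      ((((hasF_coord 1 x).mul (hasF_pow (hasF_coord 3 x) 2)).divc 64).add (((hasF_pow (hasF_coord 2 x) 3).mul (hasF_inv (hasF_pow (hasF_coord 3 x) 3) (pow_ne_zero 3 hx))).divc 3))
    rw [pd_val H]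
    rcases h4 i with rfl|rfl|rfl|rfl <;>
      simp only [ContinuousLinearMap.add_apply, ContinuousLinearMap.coe_smul', Pi.smul_apply,
        ContinuousLinearMap.sub_apply, ContinuousLinearMap.neg_apply, sv0, sv1, sv2, sv3,
        pr_apply, smul_eq_mul, cE, Matrix.cons_val] <;>
      norm_num [cE, Pi.single_eq_same, Matrix.vecHead, Matrix.vecTail] <;> (try field_simp) <;> (try ring)

theorem pd2 (β γ : Fin 4) (x : Fin 4 → ℝ) (hx : x 3 ≠ 0) :
    pd β (pd γ FF) x = hE γ β x := by
  rw [pd_congr β (fun y hy => pd_FF γ y hy) hx]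
  exact pd_gE γ β x hx

theorem c3_eq (α β γ : Fin 4) (x : Fin 4 → ℝ) (hx : x 3 ≠ 0) :
    c3 α β γ x = cE γ β α x := by
  show pd α (pd β (pd γ FF)) x = _
  rw [pd_congr α (fun y hy => pd2 β γ y hy) hx]
  exact pd_hE γ β α x hx

noncomputable def etaInv : Matrix (Fin 4) (Fin 4) ℝ :=
  !![0, 4, 0, 0; 4, 0, 0, 0; 0, 0, 0, 4; 0, 0, 4, 0]

theorem one_fin_four : (1 : Matrix (Fin 4) (Fin 4) ℝ) =
    !![1,0,0,0; 0,1,0,0; 0,0,1,0; 0,0,0,1] := by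
  ext i j
  rcases h4 i with rfl|rfl|rfl|rfl <;> rcases h4 j with rfl|rfl|rfl|rfl <;> rfl

theorem eta_mul : eta * etaInv = 1 := by
  rw [one_fin_four]
  ext i j
  rcases h4 i with rfl|rfl|rfl|rfl <;> rcases h4 j with rfl|rfl|rfl|rfl <;>
    simp only [eta, etaInv, Matrix.mul_apply, Fin.sum_univ_four, Matrix.of_apply, Matrix.cons_val] <;>
    norm_num [eta, etaInv, Matrix.mul_apply, Fin.sum_univ_four, Matrix.vecHead, Matrix.vecTail]

theorem eta_inv_eq : eta⁻¹ = etaInv := Matrix.inv_eq_right_inv eta_mul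

theorem cUp_eq (δ ε ζ : Fin 4) (x : Fin 4 → ℝ) (hx : x 3 ≠ 0) :
    cUp δ ε ζ x = 4 * cE ζ ε (![1,0,3,2] δ) x := by
  have hc : ∀ a, c3 a ε ζ x = cE ζ ε a x := fun a => c3_eq a ε ζ x hx
  unfold cUp
  rw [eta_inv_eq, Fin.sum_univ_four]
  rcases h4 δ with rfl|rfl|rfl|rfl <;> simp only [hc, etaInv, Matrix.of_apply, Matrix.cons_val] <;> norm_num [hc, etaInv, Matrix.vecHead, Matrix.vecTail]

set_option maxHeartbeats 8000000 in
theorem stmt_4 :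
    (∀ (α β : Fin 4) (x : Fin 4 → ℝ), (_ : x 3 ≠ 0) → c3 0 α β x = eta α β) ∧
    IsUnit eta.det ∧
    (∀ (α β γ σ : Fin 4) (x : Fin 4 → ℝ), (_ : x 3 ≠ 0) → 
      ∑ ε, cUp ε α β x * cUp σ ε γ x = ∑ ε, cUp ε α γ x * cUp σ ε β x) := by
  refine ⟨?_, ?_, ?_⟩
  · intro α β x hx
    rw [c3_eq 0 α β x hx]
    rcases h4 α with rfl|rfl|rfl|rfl <;> rcases h4 β with rfl|rfl|rfl|rfl <;>
      simp only [cE, eta, Matrix.of_apply, Matrix.cons_val] <;>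
      norm_num [cE, eta, Matrix.vecHead, Matrix.vecTail]
  · exact Matrix.isUnit_det_of_right_inverse eta_mul
  · intro α β γ σ x hx
    have hcu : ∀ p q r : Fin 4, cUp p q r x = 4 * cE r q (![1,0,3,2] p) x :=
      fun p q r => cUp_eq p q r x hx
    rw [Fin.sum_univ_four, Fin.sum_univ_four]
    simp only [hcu]
    rcases h4 α with rfl|rfl|rfl|rfl <;> rcases h4 β with rfl|rfl|rfl|rfl <;>
      rcases h4 γ with rfl|rfl|rfl|rfl <;> rcases h4 σ with rfl|rfl|rfl|rfl <;>
      simp only [cE, Matrix.cons_val] <;>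
      norm_num [cE, Matrix.vecHead, Matrix.vecTail] <;> (try field_simp) <;> (try ring)
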